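/- arXiv:2111.03175 — 2 statements merged into one kernel-verified Lean document; each statement's English description precedes it below -/
import Mathlib

section
/- Let d ≥ 2 and let {Y_{l,m} : 1 ≤ m ≤ đ_l} be an orthonormal basis of spherical harmonics of degree l on √d S^{d−1}, viewed as harmonic homogeneous polynomials of degree l. Then for all l, l' ≥ 1 and all m, m': E[(∇Y_{l,m}(w) − (l/d) Y_{l,m}(w) w) · ∇Y_{l',m'}(w) | w uniform on √d S^{d−1}] = ((l² + l'² + (l + l')(d − 2))/(2d)) · δ_{ll'} δ_{mm'}. In particular this expectation vanishes unless (l,m) = (l',m'), in which case it equals l(l + d − 2)/d. -/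
open MeasureTheory ProbabilityTheory

noncomputable section

/-- The uniform probability measure on the sphere `√d S^{d−1} ⊆ ℝ^d`
(normalized `(d−1)`-dimensional Hausdorff measure). -/
def sphereUniform (d : ℕ) : Measure (EuclideanSpace ℝ (Fin d)) :=
  (μH[(d : ℝ) - 1] (Metric.sphere (0 : EuclideanSpace ℝ (Fin d)) (Real.sqrt d)))⁻¹ •
    (μH[(d : ℝ) - 1]).restrict (Metric.sphere (0 : EuclideanSpace ℝ (Fin d)) (Real.sqrt d))


open MvPolynomial

/-- The Laplacian `∇² = ∑ i ∂ᵢ²` on polynomials. -/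
def mvLap {d : ℕ} (f : MvPolynomial (Fin d) ℝ) : MvPolynomial (Fin d) ℝ :=
  ∑ i : Fin d, pderiv i (pderiv i f)

/-- `đ_l`, the dimension of the space of degree-`l` harmonic homogeneous polynomials in
`d` variables. -/
def harmDim (d l : ℕ) : ℕ := (d + l - 1).choose (d - 1) - (d + l - 3).choose (d - 1)

/-- Evaluation of a polynomial at a point of `ℝ^d`. -/
def sphEval {d : ℕ} (p : MvPolynomial (Fin d) ℝ) (x : EuclideanSpace ℝ (Fin d)) : ℝ :=
  MvPolynomial.eval (fun i => x i) p

namespace SG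

variable {d : ℕ}

lemma mvLap_add (f g : MvPolynomial (Fin d) ℝ) : mvLap (f + g) = mvLap f + mvLap g := by
  simp [mvLap, Finset.sum_add_distrib]

lemma mvLap_smul (c : ℝ) (f : MvPolynomial (Fin d) ℝ) : mvLap (c • f) = c • mvLap f := by
  simp [mvLap, Finset.smul_sum]

lemma mvLap_zero : mvLap (0 : MvPolynomial (Fin d) ℝ) = 0 := by simp [mvLap]

lemma mvLap_sum {ι : Type*} (s : Finset ι) (f : ι → MvPolynomial (Fin d) ℝ) :
    mvLap (∑ i ∈ s, f i) = ∑ i ∈ s, mvLap (f i) := by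
  classical
  induction s using Finset.induction_on with
  | empty => simp [mvLap_zero]
  | insert _ _ h ih => simp [Finset.sum_insert h, mvLap_add, ih]

lemma degree_eq_of_mem_support {p : MvPolynomial (Fin d) ℝ} {n : ℕ}
    (hp : p.IsHomogeneous n) {s : Fin d →₀ ℕ} (hs : s ∈ p.support) :
    ∑ i : Fin d, s i = n := by
  have h := hp (MvPolynomial.mem_support_iff.mp hs)
  rw [Finsupp.weight_apply, Finsupp.sum_fintype] at h
  · rw [← h]; simp
  · intro i; simp

lemma X_mul_pderiv_monomial (s : Fin d →₀ ℕ) (a : ℝ) (i : Fin d) :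
    X i * pderiv i (monomial s a) = (s i) • monomial s a := by
  rw [pderiv_monomial]
  rcases Nat.eq_zero_or_pos (s i) with h | h
  · simp [h]
  · rw [X, monomial_mul, one_mul]
    have hkey : Finsupp.single i 1 + (s - Finsupp.single i 1) = s := by
      ext j
      rcases eq_or_ne j i with rfl | hji
      · simp only [Finsupp.add_apply, Finsupp.tsub_apply, Finsupp.single_eq_same]
        omega
      · simp [Finsupp.single_apply, hji.symm, Finsupp.tsub_apply]
    rw [hkey, smul_monomial]
    congr 1
    push_cast
    ring

lemma euler {p : MvPolynomial (Fin d) ℝ} {n : ℕ} (hp : p.IsHomogeneous n) :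
    ∑ i : Fin d, X i * pderiv i p = (n : ℝ) • p := by
  conv_lhs => rw [p.as_sum]
  conv_rhs => rw [p.as_sum]
  rw [Finset.smul_sum]
  have : ∀ i : Fin d, X i * pderiv i (∑ v ∈ p.support, monomial v (coeff v p))
      = ∑ v ∈ p.support, X i * pderiv i (monomial v (coeff v p)) := by
    intro i
    rw [map_sum, Finset.mul_sum]
  simp_rw [this]
  rw [Finset.sum_comm]
  refine Finset.sum_congr rfl fun v hv => ?_
  have := degree_eq_of_mem_support hp hv
  calc ∑ i : Fin d, X i * pderiv i (monomial v (coeff v p))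
      = ∑ i : Fin d, (v i) • monomial v (coeff v p) := by
        simp_rw [X_mul_pderiv_monomial]
    _ = (∑ i : Fin d, v i) • monomial v (coeff v p) := by rw [Finset.sum_smul]
    _ = (n : ℝ) • monomial v (coeff v p) := by
        rw [this, Nat.cast_smul_eq_nsmul]

lemma degree_fintype (s : Fin d →₀ ℕ) : s.degree = ∑ i : Fin d, s i := by
  rw [Finsupp.degree]
  exact Finset.sum_subset (Finset.subset_univ _) (by
    intro x _ hx
    exact Finsupp.notMem_support_iff.mp hx)

lemma isHomogeneous_pderiv {p : MvPolynomial (Fin d) ℝ} {n : ℕ}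
    (hp : p.IsHomogeneous n) (i : Fin d) : (pderiv i p).IsHomogeneous (n - 1) := by
  conv => rw [p.as_sum]
  rw [map_sum]
  apply MvPolynomial.IsHomogeneous.sum
  intro v hv
  rw [pderiv_monomial]
  rcases Nat.eq_zero_or_pos (v i) with h | h
  · rw [h]; simp only [Nat.cast_zero, mul_zero, monomial_zero]
    exact MvPolynomial.isHomogeneous_zero _ _ _
  · apply MvPolynomial.isHomogeneous_monomial
    have hdeg := degree_eq_of_mem_support hp hv
    rw [degree_fintype]
    have hsplit : ∀ (w : Fin d →₀ ℕ), ∑ j : Fin d, w j = w i + ∑ j ∈ Finset.univ.erase i, w j := by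
      intro w
      rw [Finset.add_sum_erase _ _ (Finset.mem_univ i)]
    have h1 : ∀ j ∈ Finset.univ.erase i, (v - Finsupp.single i 1 : Fin d →₀ ℕ) j = v j := by
      intro j hj
      have hne : j ≠ i := (Finset.mem_erase.mp hj).1
      simp [Finsupp.tsub_apply, Finsupp.single_apply, hne.symm]
    rw [hsplit, Finset.sum_congr rfl h1]
    have h2 : (v - Finsupp.single i 1 : Fin d →₀ ℕ) i = v i - 1 := by
      simp [Finsupp.tsub_apply]
    rw [h2]
    have := hsplit v
    have hv2 : (∑ j ∈ Finset.univ.erase i, v j) = (Finset.univ.erase i).sum ⇑v := rfl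
    omega

lemma pderiv_isHomogeneous_zero {p : MvPolynomial (Fin d) ℝ}
    (hp : p.IsHomogeneous 0) (i : Fin d) : pderiv i p = 0 := by
  conv => rw [p.as_sum]
  rw [map_sum]
  apply Finset.sum_eq_zero
  intro v hv
  have hdeg := degree_eq_of_mem_support hp hv
  have hvi : v i = 0 := by
    have : v i ≤ ∑ j : Fin d, v j := Finset.single_le_sum (fun _ _ => Nat.zero_le _) (Finset.mem_univ i)
    omega
  rw [pderiv_monomial, hvi]
  simp

lemma isHomogeneous_mvLap {p : MvPolynomial (Fin d) ℝ} {n : ℕ}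
    (hp : p.IsHomogeneous n) : (mvLap p).IsHomogeneous (n - 2) := by
  apply MvPolynomial.IsHomogeneous.sum
  intro i _
  have := isHomogeneous_pderiv (isHomogeneous_pderiv hp i) i
  rwa [Nat.sub_sub] at this

lemma mvLap_of_isHomogeneous_le_one {p : MvPolynomial (Fin d) ℝ} {n : ℕ}
    (hp : p.IsHomogeneous n) (hn : n ≤ 1) : mvLap p = 0 := by
  apply Finset.sum_eq_zero
  intro i _
  have h1 : (pderiv i p).IsHomogeneous 0 := by
    have := isHomogeneous_pderiv hp i
    interval_cases n
    · rwa [Nat.zero_sub] at this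
    · rwa [Nat.sub_self] at this
  exact pderiv_isHomogeneous_zero h1 i

lemma pderiv_pderiv_comm (p : MvPolynomial (Fin d) ℝ) (i j : Fin d) :
    pderiv i (pderiv j p) = pderiv j (pderiv i p) := by
  rcases eq_or_ne i j with rfl | hij
  · rfl
  · conv_lhs => rw [p.as_sum]
    conv_rhs => rw [p.as_sum]
    rw [map_sum, map_sum, map_sum, map_sum]
    refine Finset.sum_congr rfl fun v _ => ?_
    rw [pderiv_monomial, pderiv_monomial, pderiv_monomial, pderiv_monomial]
    have hsub : v - Finsupp.single j 1 - Finsupp.single i 1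
        = v - Finsupp.single i 1 - Finsupp.single j 1 := by
      ext k; simp only [Finsupp.tsub_apply]; omega
    have hi : (v - Finsupp.single j 1 : Fin d →₀ ℕ) i = v i := by
      simp [Finsupp.tsub_apply, Finsupp.single_apply, hij.symm]
    have hj : (v - Finsupp.single i 1 : Fin d →₀ ℕ) j = v j := by
      simp [Finsupp.tsub_apply, Finsupp.single_apply, hij]
    rw [hsub, hi, hj]
    congr 1
    ring

lemma mvLap_pderiv (p : MvPolynomial (Fin d) ℝ) (i : Fin d) :
    mvLap (pderiv i p) = pderiv i (mvLap p) := by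
  rw [mvLap, mvLap, map_sum]
  refine Finset.sum_congr rfl fun j _ => ?_
  conv_lhs => rw [pderiv_pderiv_comm p j i]
  exact pderiv_pderiv_comm (pderiv j p) j i

lemma mvLap_mul (u v : MvPolynomial (Fin d) ℝ) :
    mvLap (u * v) = mvLap u * v + (2 : ℝ) • (∑ i : Fin d, pderiv i u * pderiv i v)
      + u * mvLap v := by
  have h : ∀ i : Fin d, pderiv i (pderiv i (u * v))
      = pderiv i (pderiv i u) * v + (pderiv i u * pderiv i v + pderiv i u * pderiv i v)
        + u * pderiv i (pderiv i v) := by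
    intro i
    rw [pderiv_mul, map_add, pderiv_mul, pderiv_mul]
    ring
  rw [mvLap]
  simp_rw [h]
  rw [Finset.sum_add_distrib, Finset.sum_add_distrib, Finset.sum_add_distrib]
  rw [← Finset.sum_mul, ← Finset.mul_sum, two_smul]
  rfl

def sphN (d : ℕ) : MvPolynomial (Fin d) ℝ := ∑ i : Fin d, X i ^ 2

lemma sphN_isHomogeneous : (sphN d).IsHomogeneous 2 := by
  apply MvPolynomial.IsHomogeneous.sum
  intro i _
  simpa using (MvPolynomial.isHomogeneous_X ℝ i).pow 2

lemma pderiv_sphN (i : Fin d) : pderiv i (sphN d) = 2 * X i := by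
  rw [sphN, map_sum]
  rw [Finset.sum_eq_single i]
  · rw [pderiv_pow, pderiv_X_self]
    norm_num
  · intro j _ hj
    rw [pderiv_pow, pderiv_X_of_ne hj]
    ring
  · intro h; exact absurd (Finset.mem_univ i) h

lemma mvLap_sphN : mvLap (sphN d) = ((2 * d : ℝ)) • 1 := by
  rw [mvLap]
  have : ∀ i : Fin d, pderiv i (pderiv i (sphN d)) = (2 : MvPolynomial (Fin d) ℝ) := by
    intro i
    rw [pderiv_sphN, pderiv_mul, pderiv_X_self, ← map_ofNat (C : ℝ →+* MvPolynomial (Fin d) ℝ) 2,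
      pderiv_C]
    simp
  simp_rw [this]
  rw [Finset.sum_const, Finset.card_univ, Fintype.card_fin]
  rw [nsmul_eq_mul, smul_eq_C_mul, mul_one, map_mul, map_natCast, map_ofNat]
  ring

lemma mvLap_N_mul {q : MvPolynomial (Fin d) ℝ} {m : ℕ} (hq : q.IsHomogeneous m) :
    mvLap (sphN d * q) = ((2 * d + 4 * m : ℝ)) • q + sphN d * mvLap q := by
  rw [mvLap_mul, mvLap_sphN]
  have h1 : ((2 * d : ℝ)) • (1 : MvPolynomial (Fin d) ℝ) * q = ((2 * d : ℝ)) • q := by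
    rw [smul_mul_assoc, one_mul]
  have h2 : ∑ i : Fin d, pderiv i (sphN d) * pderiv i q
      = (2 : ℝ) • ((m : ℝ) • q) := by
    have : ∀ i : Fin d, pderiv i (sphN d) * pderiv i q = (2:ℝ) • (X i * pderiv i q) := by
      intro i
      rw [pderiv_sphN]
      rw [smul_eq_C_mul, map_ofNat]
      ring
    simp_rw [this]
    rw [← Finset.smul_sum, euler hq]
  rw [h1, h2, smul_smul, smul_smul]
  rw [← add_smul]
  congr 2
  ring

lemma mvLap_pow_N_mul (i : ℕ) {g : MvPolynomial (Fin d) ℝ} {n : ℕ} (hg : g.IsHomogeneous n) :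
    mvLap (sphN d ^ (i+1) * g)
      = ((2*(i+1)*(2*n + d + 2*i) : ℝ)) • (sphN d ^ i * g) + sphN d ^ (i+1) * mvLap g := by
  induction i generalizing g n with
  | zero =>
    rw [pow_one, pow_zero, one_mul, mvLap_N_mul hg]
    congr 2
    push_cast
    ring
  | succ i ih =>
    have hpow : sphN d ^ (i+2) * g = sphN d * (sphN d ^ (i+1) * g) := by
      rw [← mul_assoc, ← pow_succ']
    rw [hpow]
    have hhom : (sphN d ^ (i+1) * g).IsHomogeneous (2*(i+1) + n) :=
      (sphN_isHomogeneous.pow (i+1)).mul hg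
    rw [mvLap_N_mul hhom, ih hg]
    have hN2 : sphN d * ((2 * ((i:ℝ) + 1) * (2 * n + d + 2 * i)) • (sphN d ^ i * g)
          + sphN d ^ (i+1) * mvLap g)
        = (2 * ((i:ℝ) + 1) * (2 * n + d + 2 * i)) • (sphN d ^ (i+1) * g)
          + sphN d ^ (i+2) * mvLap g := by
      rw [mul_add (sphN d), mul_smul_comm, ← mul_assoc, ← pow_succ', ← mul_assoc, ← pow_succ']
    rw [hN2, ← add_assoc, ← add_smul]
    congr 2
    push_cast
    ring

lemma iter_mvLap_smul (k : ℕ) (c : ℝ) (p : MvPolynomial (Fin d) ℝ) :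
    mvLap^[k] (c • p) = c • mvLap^[k] p := by
  induction k generalizing p with
  | zero => rfl
  | succ k ih => rw [Function.iterate_succ_apply, Function.iterate_succ_apply, mvLap_smul, ih]

lemma iter_mvLap_sum (k : ℕ) {ι : Type*} (s : Finset ι) (f : ι → MvPolynomial (Fin d) ℝ) :
    mvLap^[k] (∑ i ∈ s, f i) = ∑ i ∈ s, mvLap^[k] (f i) := by
  induction k generalizing f with
  | zero => rfl
  | succ k ih =>
    rw [Function.iterate_succ_apply, mvLap_sum, ih]
    exact Finset.sum_congr rfl fun i _ => (Function.iterate_succ_apply _ _ _).symm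

lemma iter_mvLap_kill : ∀ (l : ℕ) (u v : MvPolynomial (Fin d) ℝ),
    u.IsHomogeneous l → mvLap u = 0 → mvLap v = 0 → mvLap^[l+1] (u * v) = 0 := by
  intro l
  induction l with
  | zero =>
    intro u v hu hLu hLv
    rw [Function.iterate_one, mvLap_mul, hLu, hLv]
    have : ∀ i : Fin d, pderiv i u * pderiv i v = 0 := by
      intro i
      rw [pderiv_isHomogeneous_zero hu i, zero_mul]
    simp [this]
  | succ l ih =>
    intro u v hu hLu hLv
    rw [Function.iterate_succ_apply, mvLap_mul, hLu, hLv]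
    simp only [zero_mul, mul_zero, add_zero, zero_add]
    rw [iter_mvLap_smul, iter_mvLap_sum]
    have : ∀ i : Fin d, mvLap^[l+1] (pderiv i u * pderiv i v) = 0 := by
      intro i
      apply ih
      · have := isHomogeneous_pderiv hu i
        simpa using this
      · rw [mvLap_pderiv, hLu, map_zero]
      · rw [mvLap_pderiv, hLv, map_zero]
    simp [this]

section Meas
variable {d : ℕ}

lemma sphereUniform_zero_or_prob (d : ℕ) :
    sphereUniform d = 0 ∨ IsProbabilityMeasure (sphereUniform d) := by
  by_cases h0 : μH[(d:ℝ)-1] (Metric.sphere (0 : EuclideanSpace ℝ (Fin d)) (Real.sqrt d)) = 0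
  · left
    rw [sphereUniform, Measure.restrict_eq_zero.mpr h0]
    simp
  by_cases htop : μH[(d:ℝ)-1] (Metric.sphere (0 : EuclideanSpace ℝ (Fin d)) (Real.sqrt d)) = ⊤
  · left
    rw [sphereUniform, htop]
    simp
  · right
    constructor
    rw [sphereUniform, Measure.smul_apply, Measure.restrict_apply MeasurableSet.univ,
      Set.univ_inter, smul_eq_mul]
    exact ENNReal.inv_mul_cancel h0 htop

lemma continuous_sphEval (p : MvPolynomial (Fin d) ℝ) : Continuous (sphEval p) := by
  have h : sphEval p = fun x : EuclideanSpace ℝ (Fin d) =>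
      ∑ s ∈ p.support, p.coeff s * ∏ i ∈ s.support, (x i) ^ (s i) := by
    funext x
    rw [sphEval]
    conv_lhs => rw [p.as_sum]
    rw [map_sum]
    refine Finset.sum_congr rfl fun s _ => ?_
    rw [eval_monomial]
    rfl
  rw [h]
  apply continuous_finset_sum
  intro s _
  apply Continuous.mul continuous_const
  apply continuous_finset_prod
  intro i _
  exact (by fun_prop : Continuous fun x : EuclideanSpace ℝ (Fin d) => x i).pow _

lemma ae_mem_sphere (d : ℕ) :
    ∀ᵐ x ∂(sphereUniform d), x ∈ Metric.sphere (0 : EuclideanSpace ℝ (Fin d)) (Real.sqrt d) := by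
  rw [ae_iff]
  have h1 : {x : EuclideanSpace ℝ (Fin d) |
      ¬ x ∈ Metric.sphere (0 : EuclideanSpace ℝ (Fin d)) (Real.sqrt d)}
      = (Metric.sphere (0 : EuclideanSpace ℝ (Fin d)) (Real.sqrt d))ᶜ := rfl
  rw [h1, sphereUniform, Measure.smul_apply,
    Measure.restrict_apply (Metric.isClosed_sphere.measurableSet.compl)]
  rw [Set.compl_inter_self]
  simp

lemma integrable_sphEval (hprob : IsProbabilityMeasure (sphereUniform d))
    (p : MvPolynomial (Fin d) ℝ) : Integrable (sphEval p) (sphereUniform d) := by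
  haveI := hprob
  have hcont := continuous_sphEval p
  obtain ⟨C, hC⟩ := (isCompact_sphere (0 : EuclideanSpace ℝ (Fin d))
    (Real.sqrt d)).exists_bound_of_continuousOn hcont.continuousOn
  refine ⟨hcont.aestronglyMeasurable, ?_⟩
  apply HasFiniteIntegral.of_bounded (C := C)
  filter_upwards [ae_mem_sphere d] with x hx
  exact hC x hx

/-- The integral functional. -/
def sphInt (d : ℕ) (p : MvPolynomial (Fin d) ℝ) : ℝ := ∫ x, sphEval p x ∂(sphereUniform d)

lemma sphEval_add (p q : MvPolynomial (Fin d) ℝ) (x : EuclideanSpace ℝ (Fin d)) :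
    sphEval (p + q) x = sphEval p x + sphEval q x := by simp [sphEval]

lemma sphEval_mul (p q : MvPolynomial (Fin d) ℝ) (x : EuclideanSpace ℝ (Fin d)) :
    sphEval (p * q) x = sphEval p x * sphEval q x := by simp [sphEval]

lemma sphEval_smul (c : ℝ) (p : MvPolynomial (Fin d) ℝ) (x : EuclideanSpace ℝ (Fin d)) :
    sphEval (c • p) x = c * sphEval p x := by simp [sphEval]

lemma sphEval_one (x : EuclideanSpace ℝ (Fin d)) : sphEval (1 : MvPolynomial (Fin d) ℝ) x = 1 := by
  simp [sphEval]

lemma sphEval_sum {ι : Type*} (s : Finset ι) (f : ι → MvPolynomial (Fin d) ℝ)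
    (x : EuclideanSpace ℝ (Fin d)) : sphEval (∑ i ∈ s, f i) x = ∑ i ∈ s, sphEval (f i) x := by
  simp [sphEval]

lemma sphInt_add (hprob : IsProbabilityMeasure (sphereUniform d)) (p q : MvPolynomial (Fin d) ℝ) :
    sphInt d (p + q) = sphInt d p + sphInt d q := by
  rw [sphInt, sphInt, sphInt]
  rw [← integral_add (integrable_sphEval hprob p) (integrable_sphEval hprob q)]
  simp_rw [sphEval_add]

lemma sphInt_smul (c : ℝ) (p : MvPolynomial (Fin d) ℝ) :
    sphInt d (c • p) = c * sphInt d p := by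
  rw [sphInt, sphInt, ← integral_const_mul]
  simp_rw [sphEval_smul]

lemma sphInt_zero : sphInt d 0 = 0 := by
  have : (0 : MvPolynomial (Fin d) ℝ) = (0:ℝ) • 0 := by simp
  rw [this, sphInt_smul]
  ring

lemma sphInt_sum (hprob : IsProbabilityMeasure (sphereUniform d)) {ι : Type*} (s : Finset ι)
    (f : ι → MvPolynomial (Fin d) ℝ) :
    sphInt d (∑ i ∈ s, f i) = ∑ i ∈ s, sphInt d (f i) := by
  classical
  induction s using Finset.induction_on with
  | empty => simp [sphInt_zero]
  | insert _ _ h ih => rw [Finset.sum_insert h, sphInt_add hprob, ih, Finset.sum_insert h]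

lemma sphInt_one (hprob : IsProbabilityMeasure (sphereUniform d)) :
    sphInt d 1 = 1 := by
  haveI := hprob
  rw [sphInt]
  simp_rw [sphEval_one]
  simp

lemma sphEval_sphN_of_mem {x : EuclideanSpace ℝ (Fin d)}
    (hx : x ∈ Metric.sphere (0 : EuclideanSpace ℝ (Fin d)) (Real.sqrt d)) :
    sphEval (sphN d) x = d := by
  have h1 : sphEval (sphN d) x = ∑ i, (x i) ^ 2 := by
    rw [sphN, sphEval_sum]
    refine Finset.sum_congr rfl fun i _ => ?_
    simp [sphEval]
  rw [h1]
  have h2 : ‖x‖ = Real.sqrt d := by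
    simpa using mem_sphere_zero_iff_norm.mp hx
  have h3 : ‖x‖ ^ 2 = ∑ i, (x i) ^ 2 := by
    rw [EuclideanSpace.norm_eq]
    rw [Real.sq_sqrt]
    · refine Finset.sum_congr rfl fun i _ => ?_
      rw [Real.norm_eq_abs, sq_abs]
    · positivity
  rw [← h3, h2, Real.sq_sqrt (Nat.cast_nonneg d)]

lemma sphInt_N_mul (p : MvPolynomial (Fin d) ℝ) :
    sphInt d (sphN d * p) = d * sphInt d p := by
  rw [sphInt, sphInt, ← integral_const_mul]
  apply integral_congr_ae
  filter_upwards [ae_mem_sphere d] with x hx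
  rw [sphEval_mul, sphEval_sphN_of_mem hx]

end Meas

section Iso
variable {d : ℕ}

/-- Composition of a polynomial with a linear isometry: `(isoComp R p)(x) = p (R x)`. -/
def isoComp (R : EuclideanSpace ℝ (Fin d) ≃ₗᵢ[ℝ] EuclideanSpace ℝ (Fin d))
    (p : MvPolynomial (Fin d) ℝ) : MvPolynomial (Fin d) ℝ :=
  aeval (fun i => ∑ j, C (R (EuclideanSpace.single j (1:ℝ)) i) * X j) p

lemma coord_symm (R : EuclideanSpace ℝ (Fin d) ≃ₗᵢ[ℝ] EuclideanSpace ℝ (Fin d))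
    (j i : Fin d) :
    R (EuclideanSpace.single j (1:ℝ)) i = R.symm (EuclideanSpace.single i (1:ℝ)) j := by
  have h1 : R (EuclideanSpace.single j (1:ℝ)) i
      = inner ℝ (R (EuclideanSpace.single j (1:ℝ))) (EuclideanSpace.single i (1:ℝ)) := by
    rw [EuclideanSpace.inner_single_right]
    simp
  have h2 : (inner ℝ (R (EuclideanSpace.single j (1:ℝ))) (EuclideanSpace.single i (1:ℝ)) : ℝ)
      = inner ℝ (EuclideanSpace.single j (1:ℝ)) (R.symm (EuclideanSpace.single i (1:ℝ))) := by
    conv_lhs => rw [show (EuclideanSpace.single i (1:ℝ))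
      = R (R.symm (EuclideanSpace.single i (1:ℝ))) by rw [R.apply_symm_apply]]
    rw [R.inner_map_map]
  rw [h1, h2, EuclideanSpace.inner_single_left]
  simp

lemma apply_coord (R : EuclideanSpace ℝ (Fin d) ≃ₗᵢ[ℝ] EuclideanSpace ℝ (Fin d))
    (x : EuclideanSpace ℝ (Fin d)) (i : Fin d) :
    R x i = ∑ j, R (EuclideanSpace.single j (1:ℝ)) i * x j := by
  have h1 : R x i = (inner ℝ (R x) (EuclideanSpace.single i (1:ℝ)) : ℝ) := by
    rw [EuclideanSpace.inner_single_right]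
    simp
  have h2 : (inner ℝ (R x) (EuclideanSpace.single i (1:ℝ)) : ℝ)
      = inner ℝ x (R.symm (EuclideanSpace.single i (1:ℝ))) := by
    conv_lhs => rw [show (EuclideanSpace.single i (1:ℝ))
      = R (R.symm (EuclideanSpace.single i (1:ℝ))) by rw [R.apply_symm_apply]]
    rw [R.inner_map_map]
  rw [h1, h2, PiLp.inner_apply]
  refine Finset.sum_congr rfl fun j _ => ?_
  rw [coord_symm]
  simp [RCLike.inner_apply, mul_comm]

lemma sphEval_isoComp (R : EuclideanSpace ℝ (Fin d) ≃ₗᵢ[ℝ] EuclideanSpace ℝ (Fin d))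
    (p : MvPolynomial (Fin d) ℝ) (x : EuclideanSpace ℝ (Fin d)) :
    sphEval (isoComp R p) x = sphEval p (R x) := by
  rw [sphEval, sphEval, isoComp]
  rw [aeval_def, MvPolynomial.algebraMap_eq]
  rw [eval₂_comp_left (eval (fun i => x i)) C _ p]
  have h1 : (eval (fun i => x i)).comp (C : ℝ →+* MvPolynomial (Fin d) ℝ) = RingHom.id ℝ := by
    ext r
    simp
  rw [h1]
  have h2 : ∀ v : Fin d → ℝ, eval₂ (RingHom.id ℝ) v p = eval v p := fun v => rfl
  rw [h2]
  have h3 : (⇑(eval fun i => x i) ∘ fun i => ∑ j, C (R (EuclideanSpace.single j (1:ℝ)) i) * X j)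
      = fun i => R x i := by
    funext i
    rw [Function.comp_apply, apply_coord R x i]
    simp
  rw [h3]

lemma isoComp_isHomogeneous (R : EuclideanSpace ℝ (Fin d) ≃ₗᵢ[ℝ] EuclideanSpace ℝ (Fin d))
    {p : MvPolynomial (Fin d) ℝ} {n : ℕ} (hp : p.IsHomogeneous n) :
    (isoComp R p).IsHomogeneous n := by
  have := hp.aeval (fun i => ∑ j, C (R (EuclideanSpace.single j (1:ℝ)) i) * X j) (n := 1) ?_
  · simpa [isoComp] using this
  · intro i
    apply MvPolynomial.IsHomogeneous.sum
    intro j _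
    exact (MvPolynomial.isHomogeneous_X ℝ j).C_mul _

lemma pderiv_aeval_linear (g : Fin d → MvPolynomial (Fin d) ℝ) (p : MvPolynomial (Fin d) ℝ)
    (j : Fin d) :
    pderiv j (aeval g p) = ∑ i, pderiv j (g i) * aeval g (pderiv i p) := by
  induction p using MvPolynomial.induction_on with
  | C a => simp
  | add p q hp hq =>
    rw [map_add, map_add, hp, hq, ← Finset.sum_add_distrib]
    refine Finset.sum_congr rfl fun i _ => ?_
    rw [map_add, map_add, mul_add]
  | mul_X p k hp =>
    rw [map_mul, aeval_X, pderiv_mul, hp]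
    have hterm : ∀ i : Fin d, pderiv j (g i) * aeval g (pderiv i (p * X k))
        = pderiv j (g i) * aeval g (pderiv i p) * g k
          + (if k = i then pderiv j (g i) * aeval g p else 0) := by
      intro i
      rw [pderiv_mul, map_add, map_mul, aeval_X, pderiv_X]
      rcases eq_or_ne k i with rfl | hki
      · simp only [Pi.single_eq_same, mul_one, if_true, eq_self_iff_true]
        ring
      · simp only [if_neg hki, Pi.single_eq_of_ne hki, mul_zero, map_zero, add_zero]
        ring
    simp_rw [hterm]
    rw [Finset.sum_add_distrib, Finset.sum_ite_eq, if_pos (Finset.mem_univ k), Finset.sum_mul]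
    ring

lemma coord_orthonormality (R : EuclideanSpace ℝ (Fin d) ≃ₗᵢ[ℝ] EuclideanSpace ℝ (Fin d))
    (i i' : Fin d) :
    ∑ j, R (EuclideanSpace.single j (1:ℝ)) i * R (EuclideanSpace.single j (1:ℝ)) i'
      = if i = i' then 1 else 0 := by
  simp_rw [coord_symm R]
  have := EuclideanSpace.inner_single_left (𝕜 := ℝ) i (1:ℝ)
    (R.symm (EuclideanSpace.single i' (1:ℝ)))
  have hsum : ∑ j, R.symm (EuclideanSpace.single i (1:ℝ)) j
        * R.symm (EuclideanSpace.single i' (1:ℝ)) j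
      = (inner ℝ (R.symm (EuclideanSpace.single i (1:ℝ)))
          (R.symm (EuclideanSpace.single i' (1:ℝ))) : ℝ) := by
    rw [PiLp.inner_apply]
    simp [RCLike.inner_apply, mul_comm]
  rw [hsum, R.symm.inner_map_map, EuclideanSpace.inner_single_left]
  simp [EuclideanSpace.single_apply, eq_comm]

lemma mvLap_isoComp (R : EuclideanSpace ℝ (Fin d) ≃ₗᵢ[ℝ] EuclideanSpace ℝ (Fin d))
    (p : MvPolynomial (Fin d) ℝ) :
    mvLap (isoComp R p) = isoComp R (mvLap p) := by
  set g : Fin d → MvPolynomial (Fin d) ℝ :=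
    fun i => ∑ j, C (R (EuclideanSpace.single j (1:ℝ)) i) * X j with hg
  have hpg : ∀ i j : Fin d, pderiv j (g i) = C (R (EuclideanSpace.single j (1:ℝ)) i) := by
    intro i j
    rw [hg]
    simp only [map_sum]
    rw [Finset.sum_eq_single j]
    · rw [pderiv_C_mul, pderiv_X_self, mul_one]
    · intro b _ hb
      rw [pderiv_C_mul, pderiv_X_of_ne hb, mul_zero]
    · intro h; exact absurd (Finset.mem_univ j) h
  rw [mvLap, isoComp]
  calc ∑ j : Fin d, pderiv j (pderiv j (aeval g p))
      = ∑ j : Fin d, ∑ i, ∑ i', C (R (EuclideanSpace.single j (1:ℝ)) i)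
          * (C (R (EuclideanSpace.single j (1:ℝ)) i') * aeval g (pderiv i' (pderiv i p))) := by
        refine Finset.sum_congr rfl fun j _ => ?_
        rw [pderiv_aeval_linear g p j, map_sum]
        refine Finset.sum_congr rfl fun i _ => ?_
        rw [hpg, pderiv_C_mul, pderiv_aeval_linear g (pderiv i p) j, Finset.mul_sum]
        refine Finset.sum_congr rfl fun i' _ => ?_
        rw [hpg]
    _ = ∑ i, ∑ i', (∑ j : Fin d, C (R (EuclideanSpace.single j (1:ℝ)) i
          * R (EuclideanSpace.single j (1:ℝ)) i')) * aeval g (pderiv i' (pderiv i p)) := by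
        rw [Finset.sum_comm]
        refine Finset.sum_congr rfl fun i _ => ?_
        rw [Finset.sum_comm]
        refine Finset.sum_congr rfl fun i' _ => ?_
        rw [Finset.sum_mul]
        refine Finset.sum_congr rfl fun j _ => ?_
        rw [map_mul, mul_assoc]
    _ = ∑ i, ∑ i', (if i = i' then (1:MvPolynomial (Fin d) ℝ) else 0)
          * aeval g (pderiv i' (pderiv i p)) := by
        refine Finset.sum_congr rfl fun i _ => Finset.sum_congr rfl fun i' _ => ?_
        congr 1
        rw [← map_sum, coord_orthonormality]
        split_ifs <;> simp
    _ = aeval g (mvLap p) := by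
        rw [mvLap, map_sum]
        refine Finset.sum_congr rfl fun i _ => ?_
        rw [Finset.sum_eq_single i]
        · rw [if_pos rfl, one_mul]
        · intro b _ hb
          rw [if_neg (fun hc => hb hc.symm), zero_mul]
        · intro h; exact absurd (Finset.mem_univ i) h

end Iso

section Inv
variable {d : ℕ}

lemma measurePreserving_iso (R : EuclideanSpace ℝ (Fin d) ≃ₗᵢ[ℝ] EuclideanSpace ℝ (Fin d)) :
    MeasurePreserving ⇑R (sphereUniform d) (sphereUniform d) := by
  have hpre : ⇑R ⁻¹' (Metric.sphere (0 : EuclideanSpace ℝ (Fin d)) (Real.sqrt d))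
      = Metric.sphere (0 : EuclideanSpace ℝ (Fin d)) (Real.sqrt d) := by
    ext x
    simp only [Set.mem_preimage, mem_sphere_zero_iff_norm]
    rw [R.norm_map]
  have hmap : Measure.map ⇑R (μH[(d:ℝ)-1] :
      Measure (EuclideanSpace ℝ (Fin d))) = μH[(d:ℝ)-1] := by
    have := R.toIsometryEquiv.map_hausdorffMeasure ((d:ℝ)-1)
    exact this
  refine ⟨R.continuous.measurable, ?_⟩
  rw [sphereUniform, Measure.map_smul]
  congr 1
  conv_lhs => rw [show (μH[(d:ℝ)-1]).restrict
      (Metric.sphere (0 : EuclideanSpace ℝ (Fin d)) (Real.sqrt d))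
    = (μH[(d:ℝ)-1]).restrict (⇑R ⁻¹'
      (Metric.sphere (0 : EuclideanSpace ℝ (Fin d)) (Real.sqrt d))) by rw [hpre]]
  rw [← Measure.restrict_map R.continuous.measurable Metric.isClosed_sphere.measurableSet, hmap]

lemma sphInt_isoComp (R : EuclideanSpace ℝ (Fin d) ≃ₗᵢ[ℝ] EuclideanSpace ℝ (Fin d))
    (p : MvPolynomial (Fin d) ℝ) : sphInt d (isoComp R p) = sphInt d p := by
  rw [sphInt, sphInt]
  calc ∫ x, sphEval (isoComp R p) x ∂(sphereUniform d)
      = ∫ x, sphEval p (R x) ∂(sphereUniform d) := by simp_rw [sphEval_isoComp]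
    _ = ∫ y, sphEval p y ∂(sphereUniform d) :=
        (measurePreserving_iso R).integral_comp R.toHomeomorph.measurableEmbedding _

lemma poly_ext {p q : MvPolynomial (Fin d) ℝ}
    (h : ∀ x : EuclideanSpace ℝ (Fin d), sphEval p x = sphEval q x) : p = q := by
  apply MvPolynomial.funext
  intro v
  have := h ((WithLp.equiv 2 (Fin d → ℝ)).symm v)
  simpa [sphEval] using this

lemma sphEval_sphN (x : EuclideanSpace ℝ (Fin d)) : sphEval (sphN d) x = ‖x‖ ^ 2 := by
  have h1 : sphEval (sphN d) x = ∑ i, (x i) ^ 2 := by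
    rw [sphN, sphEval_sum]
    refine Finset.sum_congr rfl fun i _ => ?_
    simp [sphEval]
  rw [h1, EuclideanSpace.norm_eq, Real.sq_sqrt]
  · refine (Finset.sum_congr rfl fun i _ => ?_).symm
    rw [Real.norm_eq_abs, sq_abs]
  · positivity

lemma sphEval_pow (p : MvPolynomial (Fin d) ℝ) (t : ℕ) (x : EuclideanSpace ℝ (Fin d)) :
    sphEval (p ^ t) x = (sphEval p x) ^ t := by simp [sphEval]

lemma sphEval_smul_pt {p : MvPolynomial (Fin d) ℝ} {n : ℕ} (hp : p.IsHomogeneous n) (r : ℝ)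
    (x : EuclideanSpace ℝ (Fin d)) : sphEval p (r • x) = r ^ n * sphEval p x := by
  rw [sphEval, sphEval]
  conv_lhs => rw [p.as_sum]
  conv_rhs => rw [p.as_sum]
  rw [map_sum, map_sum, Finset.mul_sum]
  refine Finset.sum_congr rfl fun s hs => ?_
  rw [eval_monomial, eval_monomial, Finsupp.prod, Finsupp.prod]
  have hsm : ∀ i : Fin d, (r • x) i = r * x i := fun i => rfl
  simp_rw [hsm, mul_pow, Finset.prod_mul_distrib, Finset.prod_pow_eq_pow_sum]
  have hsum : ∑ i ∈ s.support, s i = n := by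
    have h1 := degree_eq_of_mem_support hp hs
    have h2 := degree_fintype s
    rw [Finsupp.degree_apply] at h2
    omega
  rw [hsum]
  ring

lemma mvLap_one : mvLap (1 : MvPolynomial (Fin d) ℝ) = 0 := by
  simp [mvLap, pderiv_one]

lemma sphN_ne_zero (hd0 : 0 < d) : sphN d ≠ 0 := by
  intro hcon
  have h := congrArg (eval (fun _ : Fin d => (1:ℝ))) hcon
  rw [sphN, map_sum] at h
  simp at h
  omega

lemma exists_iso_map (x y : EuclideanSpace ℝ (Fin d)) (h : ‖x‖ = ‖y‖) :
    ∃ R : EuclideanSpace ℝ (Fin d) ≃ₗᵢ[ℝ] EuclideanSpace ℝ (Fin d), R x = y := by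
  rcases eq_or_ne x y with rfl | hxy
  · exact ⟨LinearIsometryEquiv.refl ℝ _, rfl⟩
  · exact ⟨Submodule.reflection (ℝ ∙ (x - y))ᗮ, Submodule.reflection_sub h⟩

lemma invariant_harmonic_zero (hd : 2 ≤ d) {l : ℕ} (hl : 1 ≤ l)
    {z : MvPolynomial (Fin d) ℝ} (hz : z.IsHomogeneous l) (hzh : mvLap z = 0)
    (hinv : ∀ R : EuclideanSpace ℝ (Fin d) ≃ₗᵢ[ℝ] EuclideanSpace ℝ (Fin d), isoComp R z = z) :
    z = 0 := by
  have hd0 : (0:ℕ) < d := by omega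
  set e₀ : EuclideanSpace ℝ (Fin d) := EuclideanSpace.single ⟨0, hd0⟩ (1:ℝ) with he₀
  have he₀n : ‖e₀‖ = 1 := by
    rw [he₀, EuclideanSpace.norm_single]
    norm_num
  have hval : ∀ x : EuclideanSpace ℝ (Fin d), ‖x‖ = 1 → sphEval z x = sphEval z e₀ := by
    intro x hx
    obtain ⟨R, hR⟩ := exists_iso_map e₀ x (by rw [he₀n, hx])
    have h2 := sphEval_isoComp R z e₀
    rw [hinv R, hR] at h2
    exact h2.symm
  rcases Nat.even_or_odd l with ⟨t, ht⟩ | hodd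
  · have ht1 : 1 ≤ t := by omega
    have hfun : ∀ x, sphEval z x = sphEval z e₀ * sphEval (sphN d ^ t) x := by
      intro x
      rcases eq_or_ne x 0 with rfl | hx0
      · have h1 : sphEval z (0 : EuclideanSpace ℝ (Fin d)) = 0 := by
          have h := sphEval_smul_pt hz 0 0
          rw [zero_smul] at h
          rw [h, zero_pow (by omega : l ≠ 0), zero_mul]
        rw [h1, sphEval_pow, sphEval_sphN]
        rw [norm_zero]
        rw [zero_pow (by omega : 2 ≠ 0), zero_pow (by omega : t ≠ 0), mul_zero]
      · have hxn : ‖x‖ ≠ 0 := norm_ne_zero_iff.mpr hx0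
        have hu : ‖(‖x‖⁻¹ • x)‖ = 1 := by
          rw [norm_smul, norm_inv, norm_norm, inv_mul_cancel₀ hxn]
        have hxs : x = ‖x‖ • (‖x‖⁻¹ • x) := by
          rw [smul_smul, mul_inv_cancel₀ hxn, one_smul]
        conv_lhs => rw [hxs]
        rw [sphEval_smul_pt hz, hval _ hu, sphEval_pow, sphEval_sphN]
        rw [← pow_mul, ht]
        ring
    have hzeq : z = sphEval z e₀ • (sphN d ^ t) := by
      apply poly_ext
      intro x
      rw [sphEval_smul, hfun x]
    have hlapN : mvLap (sphN d ^ t) = ((2*((t-1:ℕ)+1)*((d:ℝ) + 2*(t-1:ℕ)) : ℝ))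
        • (sphN d ^ (t-1)) := by
      have h := mvLap_pow_N_mul (t-1) (g := (1 : MvPolynomial (Fin d) ℝ))
        (MvPolynomial.isHomogeneous_one _ _)
      rw [mvLap_one, mul_zero, add_zero, mul_one, mul_one] at h
      rw [show (t-1)+1 = t by omega] at h
      rw [h]
      norm_num
    have hA : ((2*((t-1:ℕ)+1)*((d:ℝ) + 2*(t-1:ℕ)) : ℝ)) ≠ 0 := by
      have h2d : (2:ℝ) ≤ d := by exact_mod_cast hd
      have hnn : (0:ℝ) ≤ ((t-1:ℕ):ℝ) := Nat.cast_nonneg _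
      have : (0:ℝ) < 2*((t-1:ℕ)+1)*((d:ℝ) + 2*(t-1:ℕ)) := by nlinarith
      exact ne_of_gt this
    have hc : sphEval z e₀ = 0 := by
      have h0 : (0 : MvPolynomial (Fin d) ℝ)
          = C (sphEval z e₀ * (2*((t-1:ℕ)+1)*((d:ℝ) + 2*(t-1:ℕ)))) * (sphN d ^ (t-1)) := by
        calc (0 : MvPolynomial (Fin d) ℝ) = mvLap z := hzh.symm
          _ = sphEval z e₀ • mvLap (sphN d ^ t) := by rw [← mvLap_smul, ← hzeq]
          _ = _ := by rw [hlapN, smul_smul, smul_eq_C_mul]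
      have hN : (sphN d ^ (t-1) : MvPolynomial (Fin d) ℝ) ≠ 0 :=
        pow_ne_zero _ (sphN_ne_zero hd0)
      rcases mul_eq_zero.mp h0.symm with h | h
      · rcases mul_eq_zero.mp (MvPolynomial.C_eq_zero.mp h) with h' | h'
        · exact h'
        · exact absurd h' hA
      · exact absurd h hN
    rw [hzeq, hc, zero_smul]
  · have hneg := hinv (LinearIsometryEquiv.neg ℝ)
    apply poly_ext (q := 0)
    intro x
    have h1 := sphEval_isoComp (LinearIsometryEquiv.neg ℝ) z x
    rw [hneg] at h1
    have hnx : (LinearIsometryEquiv.neg ℝ) x = (-1 : ℝ) • x := by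
      simp
    rw [hnx, sphEval_smul_pt hz, hodd.neg_one_pow] at h1
    have hzero : sphEval z x = 0 := by linarith
    rw [hzero]
    simp [sphEval]

end Inv

section L5
variable {d : ℕ}

lemma sphInt_sub (hprob : IsProbabilityMeasure (sphereUniform d))
    (p q : MvPolynomial (Fin d) ℝ) : sphInt d (p - q) = sphInt d p - sphInt d q := by
  have h : p - q = p + (-1:ℝ) • q := by
    rw [neg_one_smul]
    ring
  rw [h, sphInt_add hprob, sphInt_smul]
  ring

lemma sphInt_harmonic (hd : 2 ≤ d)
    (Y : (l : ℕ) → Fin (harmDim d l) → MvPolynomial (Fin d) ℝ)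
    (hhom : ∀ l m, (Y l m).IsHomogeneous l)
    (hharm : ∀ l m, mvLap (Y l m) = 0)
    (horth : ∀ l (m m' : Fin (harmDim d l)),
      ∫ x, sphEval (Y l m) x * sphEval (Y l m') x ∂(sphereUniform d) = if m = m' then 1 else 0)
    (hspan : ∀ l (p : MvPolynomial (Fin d) ℝ), p.IsHomogeneous l → mvLap p = 0 →
      p ∈ Submodule.span ℝ (Set.range (Y l)))
    (hprob : IsProbabilityMeasure (sphereUniform d))
    {l : ℕ} (hl : 1 ≤ l) {h : MvPolynomial (Fin d) ℝ}
    (hh : h.IsHomogeneous l) (hhh : mvLap h = 0) :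
    sphInt d h = 0 := by
  have horthI : ∀ (m m' : Fin (harmDim d l)),
      sphInt d (Y l m * Y l m') = if m = m' then 1 else 0 := by
    intro m m'
    rw [sphInt]
    simp_rw [sphEval_mul]
    exact horth l m m'
  set z : MvPolynomial (Fin d) ℝ := ∑ m, sphInt d (Y l m) • Y l m with hzdef
  have hzhom : z.IsHomogeneous l := by
    apply MvPolynomial.IsHomogeneous.sum
    intro m _
    rw [smul_eq_C_mul]
    exact (hhom l m).C_mul _
  have hzharm : mvLap z = 0 := by
    rw [hzdef, mvLap_sum]
    apply Finset.sum_eq_zero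
    intro m _
    rw [mvLap_smul, hharm, smul_zero]
  have key1 : ∀ f ∈ Submodule.span ℝ (Set.range (Y l)), sphInt d (f * z) = sphInt d f := by
    intro f hf
    induction hf using Submodule.span_induction with
    | mem x hx =>
      obtain ⟨m0, rfl⟩ := hx
      have hexp : Y l m0 * z = ∑ m, sphInt d (Y l m) • (Y l m0 * Y l m) := by
        rw [hzdef, Finset.mul_sum]
        exact Finset.sum_congr rfl fun m _ => (mul_smul_comm _ _ _)
      rw [hexp, sphInt_sum hprob]
      have : ∀ m, sphInt d (sphInt d (Y l m) • (Y l m0 * Y l m))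
          = sphInt d (Y l m) * (if m0 = m then 1 else 0) := by
        intro m
        rw [sphInt_smul, horthI]
      simp_rw [this]
      simp
    | zero =>
      rw [zero_mul]
    | add x y hx hy ihx ihy =>
      rw [add_mul, sphInt_add hprob, sphInt_add hprob, ihx, ihy]
    | smul a x hx ih =>
      rw [smul_mul_assoc, sphInt_smul, sphInt_smul, ih]
  have hspanprops : ∀ f ∈ Submodule.span ℝ (Set.range (Y l)),
      f.IsHomogeneous l ∧ mvLap f = 0 := by
    intro f hf
    induction hf using Submodule.span_induction with
    | mem x hx =>
      obtain ⟨m0, rfl⟩ := hx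
      exact ⟨hhom l m0, hharm l m0⟩
    | zero => exact ⟨MvPolynomial.isHomogeneous_zero _ _ _, mvLap_zero⟩
    | add x y hx hy ihx ihy =>
      exact ⟨ihx.1.add ihy.1, by rw [mvLap_add, ihx.2, ihy.2, add_zero]⟩
    | smul a x hx ih =>
      refine ⟨?_, by rw [mvLap_smul, ih.2, smul_zero]⟩
      rw [smul_eq_C_mul]
      exact ih.1.C_mul _
  have hmemS : ∀ (S : EuclideanSpace ℝ (Fin d) ≃ₗᵢ[ℝ] EuclideanSpace ℝ (Fin d))
      (f : MvPolynomial (Fin d) ℝ), f ∈ Submodule.span ℝ (Set.range (Y l)) →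
      isoComp S f ∈ Submodule.span ℝ (Set.range (Y l)) := by
    intro S f hf
    obtain ⟨h1, h2⟩ := hspanprops f hf
    exact hspan l _ (isoComp_isHomogeneous S h1) (by rw [mvLap_isoComp, h2]; exact map_zero (aeval _))
  have hzmem : z ∈ Submodule.span ℝ (Set.range (Y l)) := hspan l z hzhom hzharm
  have key2 : ∀ R : EuclideanSpace ℝ (Fin d) ≃ₗᵢ[ℝ] EuclideanSpace ℝ (Fin d),
      isoComp R z = z := by
    intro R
    have hAz : isoComp R z ∈ Submodule.span ℝ (Set.range (Y l)) := hmemS R z hzmem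
    have hgmem : isoComp R z - z ∈ Submodule.span ℝ (Set.range (Y l)) :=
      Submodule.sub_mem _ hAz hzmem
    have key3 : ∀ f ∈ Submodule.span ℝ (Set.range (Y l)),
        sphInt d (f * isoComp R z) = sphInt d f := by
      intro f hf
      have hconv : f * isoComp R z = isoComp R (isoComp R.symm f * z) := by
        apply poly_ext
        intro x
        rw [sphEval_isoComp, sphEval_mul, sphEval_mul, sphEval_isoComp, sphEval_isoComp,
          R.symm_apply_apply]
      rw [hconv, sphInt_isoComp, key1 _ (hmemS R.symm f hf), sphInt_isoComp]
    have hg2 : sphInt d ((isoComp R z - z) * (isoComp R z - z)) = 0 := by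
      have h1 : (isoComp R z - z) * (isoComp R z - z)
          = (isoComp R z - z) * isoComp R z - (isoComp R z - z) * z := by ring
      rw [h1, sphInt_sub hprob, key3 _ hgmem, key1 _ hgmem, sub_self]
    obtain ⟨c, hc⟩ := (Submodule.mem_span_range_iff_exists_fun ℝ).mp hgmem
    have hgg : sphInt d ((isoComp R z - z) * (isoComp R z - z)) = ∑ m, c m ^ 2 := by
      rw [← hc, Finset.sum_mul]
      have hterm : ∀ i, (c i • Y l i) * (∑ j, c j • Y l j)
          = ∑ j, (c i * c j) • (Y l i * Y l j) := by
        intro i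
        rw [Finset.mul_sum]
        refine Finset.sum_congr rfl fun j _ => ?_
        rw [smul_mul_assoc, mul_smul_comm, smul_smul]
      simp_rw [hterm]
      rw [sphInt_sum hprob]
      have hterm2 : ∀ i, sphInt d (∑ j, (c i * c j) • (Y l i * Y l j))
          = ∑ j, (c i * c j) * sphInt d (Y l i * Y l j) := by
        intro i
        rw [sphInt_sum hprob]
        exact Finset.sum_congr rfl fun j _ => sphInt_smul _ _
      simp_rw [hterm2, horthI]
      refine Finset.sum_congr rfl fun i _ => ?_
      rw [Finset.sum_eq_single i]
      · rw [if_pos rfl, mul_one, sq]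
      · intro b _ hb
        rw [if_neg (fun hc' => hb hc'.symm), mul_zero]
      · intro hcon
        exact absurd (Finset.mem_univ i) hcon
    have hcz : ∀ m, c m = 0 := by
      intro m
      have hnn : ∀ i ∈ Finset.univ, (0:ℝ) ≤ c i ^ 2 := fun i _ => sq_nonneg _
      have hs0 : ∑ m, c m ^ 2 = 0 := by rw [← hgg, hg2]
      have := (Finset.sum_eq_zero_iff_of_nonneg hnn).mp hs0 m (Finset.mem_univ m)
      exact pow_eq_zero_iff (two_ne_zero) |>.mp this
    have hgz : isoComp R z - z = 0 := by
      rw [← hc]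
      apply Finset.sum_eq_zero
      intro m _
      rw [hcz, zero_smul]
    exact sub_eq_zero.mp hgz
  have hz0 : z = 0 := invariant_harmonic_zero hd hl hzhom hzharm key2
  have hfin := key1 h (hspan l h hh hhh)
  rw [hz0, mul_zero, sphInt_zero] at hfin
  exact hfin.symm

end L5

section L4
variable {d : ℕ}

lemma iter_mvLap_homog : ∀ (j : ℕ) {p : MvPolynomial (Fin d) ℝ} {n : ℕ},
    p.IsHomogeneous n → (mvLap^[j] p).IsHomogeneous (n - 2*j) := by
  intro j
  induction j with
  | zero => intro p n hp; simpa using hp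
  | succ j ih =>
    intro p n hp
    rw [Function.iterate_succ_apply]
    have := ih (isHomogeneous_mvLap hp)
    rwa [show n - 2 - 2*j = n - 2*(j+1) by omega] at this

lemma iter_mvLap_zero (j : ℕ) : mvLap^[j] (0 : MvPolynomial (Fin d) ℝ) = 0 :=
  Function.iterate_fixed mvLap_zero j

lemma iter_mvLap_high : ∀ (j : ℕ) {p : MvPolynomial (Fin d) ℝ} {n : ℕ},
    p.IsHomogeneous n → n < 2*j → mvLap^[j] p = 0 := by
  intro j
  induction j with
  | zero => intro p n _ h; omega
  | succ j ih =>
    intro p n hp hj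
    rw [Function.iterate_succ_apply]
    rcases le_or_gt n 1 with h1 | h1
    · rw [mvLap_of_isHomogeneous_le_one hp h1, iter_mvLap_zero]
    · exact ih (isHomogeneous_mvLap hp) (by omega)

lemma exists_lap_preimage (hd : 2 ≤ d) (m : ℕ) (q : MvPolynomial (Fin d) ℝ)
    (hq : q.IsHomogeneous m) :
    ∃ r : MvPolynomial (Fin d) ℝ, r.IsHomogeneous m ∧ mvLap (sphN d * r) = q := by
  set β : ℕ → ℝ := fun j => 2*(j+1)*(2*m - 2*j + d) with hβdef
  have hβ : ∀ j, j ≤ m → β j ≠ 0 := by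
    intro j hj
    have h1 : ((j:ℝ)) ≤ (m:ℝ) := by exact_mod_cast hj
    have h2 : (2:ℝ) ≤ (d:ℝ) := by exact_mod_cast hd
    have h3 : (0:ℝ) < 2*((j:ℝ)+1)*(2*m - 2*j + d) := by nlinarith
    exact ne_of_gt h3
  set P : ℕ → ℝ := fun j => ∏ t ∈ Finset.range (j+1), β t with hPdef
  have hP : ∀ j, j ≤ m → P j ≠ 0 := by
    intro j hj
    apply Finset.prod_ne_zero_iff.mpr
    intro t ht
    rw [Finset.mem_range] at ht
    exact hβ t (by omega)
  set a : ℕ → ℝ := fun j => (-1)^j / P j with hadef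
  set T : ℕ → MvPolynomial (Fin d) ℝ := fun j => sphN d ^ j * mvLap^[j] q with hTdef
  have hPsucc : ∀ j, P (j+1) = P j * β (j+1) := by
    intro j
    rw [hPdef]
    simp only []
    exact Finset.prod_range_succ β (j+1)
  have hcoef : ∀ j, j < m → a (j+1) * β (j+1) + a j = 0 := by
    intro j hj
    have h1 : P j ≠ 0 := hP j (by omega)
    have h2 : β (j+1) ≠ 0 := hβ (j+1) (by omega)
    have he : a (j+1) * β (j+1) + a j
        = ((-1)^(j+1) / (P j * β (j+1))) * β (j+1) + (-1)^j / P j := by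
      rw [hadef]
      simp only []
      rw [hPsucc]
    rw [he]
    field_simp
    ring
  refine ⟨∑ j ∈ Finset.range (m+1), a j • T j, ?_, ?_⟩
  · apply MvPolynomial.IsHomogeneous.sum
    intro j hj
    rw [Finset.mem_range] at hj
    rcases le_or_gt (2*j) m with h2j | h2j
    · have h1 : (T j).IsHomogeneous (2*j + (m - 2*j)) :=
        (sphN_isHomogeneous.pow j).mul (iter_mvLap_homog j hq)
      rw [show 2*j + (m - 2*j) = m by omega] at h1
      rw [smul_eq_C_mul]
      exact h1.C_mul _
    · have h1 : T j = 0 := by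
        rw [hTdef]
        simp only []
        rw [iter_mvLap_high j hq h2j, mul_zero]
      rw [h1, smul_zero]
      exact MvPolynomial.isHomogeneous_zero _ _ _
  · have hmul : sphN d * ∑ j ∈ Finset.range (m+1), a j • T j
        = ∑ j ∈ Finset.range (m+1), a j • (sphN d ^ (j+1) * mvLap^[j] q) := by
      rw [Finset.mul_sum]
      refine Finset.sum_congr rfl fun j _ => ?_
      rw [mul_smul_comm, hTdef]
      simp only []
      rw [← mul_assoc, ← pow_succ']
    rw [hmul, mvLap_sum]
    have hterm : ∀ j ∈ Finset.range (m+1),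
        mvLap (a j • (sphN d ^ (j+1) * mvLap^[j] q))
          = (a j * β j) • T j + a j • T (j+1) := by
      intro j hj
      rw [Finset.mem_range] at hj
      rw [mvLap_smul]
      rcases le_or_gt (2*j) m with h2j | h2j
      · rw [mvLap_pow_N_mul j (iter_mvLap_homog j hq)]
        rw [smul_add, smul_smul]
        have hco : a j * (2*((j:ℝ)+1)*(2*((m - 2*j:ℕ):ℝ) + d + 2*j)) = a j * β j := by
          rw [Nat.cast_sub h2j, hβdef]
          simp only []
          push_cast
          ring_nf
        rw [hco]
        have e1 : (sphN d ^ j * mvLap^[j] q) = T j := rfl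
        have e2 : sphN d ^ (j+1) * mvLap (mvLap^[j] q) = T (j+1) := by
          rw [← Function.iterate_succ_apply' mvLap]
        rw [e1, e2]
      · have hz1 : mvLap^[j] q = 0 := iter_mvLap_high j hq h2j
        have hz2 : mvLap^[j+1] q = 0 := iter_mvLap_high (j+1) hq (by omega)
        have hT1 : T j = 0 := by
          rw [hTdef]
          simp only []
          rw [hz1, mul_zero]
        have hT2 : T (j+1) = 0 := by
          rw [hTdef]
          simp only []
          rw [hz2, mul_zero]
        rw [hz1, hT1, hT2, mul_zero, mvLap_zero]
        simp
    rw [Finset.sum_congr rfl hterm, Finset.sum_add_distrib]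
    rw [Finset.sum_range_succ' (fun j => (a j * β j) • T j) m]
    rw [Finset.sum_range_succ (fun j => a j • T (j+1)) m]
    have hTm1 : T (m+1) = 0 := by
      rw [hTdef]
      simp only []
      rw [iter_mvLap_high (m+1) hq (by omega), mul_zero]
    rw [hTm1, smul_zero, add_zero]
    have hre : (∑ j ∈ Finset.range m, (a (j+1) * β (j+1)) • T (j+1) + (a 0 * β 0) • T 0)
        + ∑ j ∈ Finset.range m, a j • T (j+1)
        = (a 0 * β 0) • T 0
          + ∑ j ∈ Finset.range m, ((a (j+1) * β (j+1) + a j) • T (j+1)) := by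
      simp_rw [add_smul]
      rw [Finset.sum_add_distrib]
      ring
    rw [hre]
    have hzero : ∑ j ∈ Finset.range m, ((a (j+1) * β (j+1) + a j) • T (j+1)) = 0 :=
      Finset.sum_eq_zero fun j hj => by
        rw [hcoef j (Finset.mem_range.mp hj), zero_smul]
    rw [hzero, add_zero]
    have hT0 : T 0 = q := by
      rw [hTdef]
      simp only []
      rw [pow_zero, one_mul, Function.iterate_zero_apply]
    have ha0 : a 0 * β 0 = 1 := by
      have h2 : β 0 ≠ 0 := hβ 0 (by omega)
      rw [hadef, hPdef]
      simp only []
      rw [Finset.prod_range_one]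
      field_simp
    rw [hT0, ha0, one_smul]

lemma mvLap_sub (f g : MvPolynomial (Fin d) ℝ) : mvLap (f - g) = mvLap f - mvLap g := by
  have h : f - g = f + (-1:ℝ) • g := by
    rw [neg_one_smul]
    ring
  rw [h, mvLap_add, mvLap_smul, neg_one_smul]
  ring

lemma sphInt_mvLap_eq (hd : 2 ≤ d)
    (Y : (l : ℕ) → Fin (harmDim d l) → MvPolynomial (Fin d) ℝ)
    (hhom : ∀ l m, (Y l m).IsHomogeneous l)
    (hharm : ∀ l m, mvLap (Y l m) = 0)
    (horth : ∀ l (m m' : Fin (harmDim d l)),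
      ∫ x, sphEval (Y l m) x * sphEval (Y l m') x ∂(sphereUniform d) = if m = m' then 1 else 0)
    (hspan : ∀ l (p : MvPolynomial (Fin d) ℝ), p.IsHomogeneous l → mvLap p = 0 →
      p ∈ Submodule.span ℝ (Set.range (Y l)))
    (hprob : IsProbabilityMeasure (sphereUniform d)) :
    ∀ (k : ℕ) (p : MvPolynomial (Fin d) ℝ), p.IsHomogeneous k →
      sphInt d (mvLap p) = (k : ℝ) * ((k:ℝ) + d - 2) / d * sphInt d p := by
  intro k
  induction k using Nat.strong_induction_on with
  | _ k ih =>
  intro p hp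
  have hdne : (d:ℝ) ≠ 0 := Nat.cast_ne_zero.mpr (by omega)
  rcases le_or_gt k 1 with hk1 | hk1
  · rw [mvLap_of_isHomogeneous_le_one hp hk1, sphInt_zero]
    interval_cases k
    · norm_num
    · have h0 : sphInt d p = 0 :=
        sphInt_harmonic hd Y hhom hharm horth hspan hprob le_rfl hp
          (mvLap_of_isHomogeneous_le_one hp le_rfl)
      rw [h0, mul_zero]
  · obtain ⟨r, hrhom, hrlap⟩ := exists_lap_preimage hd (k-2) (mvLap p) (isHomogeneous_mvLap hp)
    have hhharm : mvLap (p - sphN d * r) = 0 := by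
      rw [mvLap_sub, hrlap, sub_self]
    have hhomh : (p - sphN d * r).IsHomogeneous k := by
      apply hp.sub
      have := sphN_isHomogeneous.mul hrhom
      rwa [show 2 + (k-2) = k by omega] at this
    have hIh : sphInt d (p - sphN d * r) = 0 :=
      sphInt_harmonic hd Y hhom hharm horth hspan hprob (by omega) hhomh hhharm
    have hIp : sphInt d p = d * sphInt d r := by
      have hsplit : p = (p - sphN d * r) + sphN d * r := by ring
      conv_lhs => rw [hsplit]
      rw [sphInt_add hprob, hIh, zero_add, sphInt_N_mul]
    have hIH := ih (k-2) (by omega) r hrhom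
    have h1 : sphInt d (mvLap p)
        = (2*(d:ℝ) + 4*((k-2:ℕ):ℝ)) * sphInt d r + d * sphInt d (mvLap r) := by
      rw [← hrlap, mvLap_N_mul hrhom, sphInt_add hprob, sphInt_smul, sphInt_N_mul]
    rw [h1, hIH, hIp]
    rw [Nat.cast_sub (by omega : 2 ≤ k)]
    field_simp
    ring

end L4

section Chain
variable {d : ℕ}

lemma sphEval_sub (p q : MvPolynomial (Fin d) ℝ) (x : EuclideanSpace ℝ (Fin d)) :
    sphEval (p - q) x = sphEval p x - sphEval q x := by simp [sphEval]

lemma sphEval_X (i : Fin d) (x : EuclideanSpace ℝ (Fin d)) :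
    sphEval (X i : MvPolynomial (Fin d) ℝ) x = x i := by simp [sphEval]

lemma sphInt_cross (hd : 2 ≤ d)
    (Y : (l : ℕ) → Fin (harmDim d l) → MvPolynomial (Fin d) ℝ)
    (hhom : ∀ l m, (Y l m).IsHomogeneous l)
    (hharm : ∀ l m, mvLap (Y l m) = 0)
    (horth : ∀ l (m m' : Fin (harmDim d l)),
      ∫ x, sphEval (Y l m) x * sphEval (Y l m') x ∂(sphereUniform d) = if m = m' then 1 else 0)
    (hspan : ∀ l (p : MvPolynomial (Fin d) ℝ), p.IsHomogeneous l → mvLap p = 0 →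
      p ∈ Submodule.span ℝ (Set.range (Y l)))
    (hprob : IsProbabilityMeasure (sphereUniform d))
    {l l' : ℕ} (hll : l < l') {u v : MvPolynomial (Fin d) ℝ}
    (hu : u.IsHomogeneous l) (hv : v.IsHomogeneous l')
    (hLu : mvLap u = 0) (hLv : mvLap v = 0) :
    sphInt d (u * v) = 0 := by
  set κ : ℕ → ℝ :=
    fun t => ((l + l' - 2*t : ℕ):ℝ) * (((l + l' - 2*t : ℕ):ℝ) + d - 2) / d with hκdef
  have hstep : ∀ t, t ≤ l → sphInt d (mvLap^[t+1] (u*v))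
      = κ t * sphInt d (mvLap^[t] (u*v)) := by
    intro t ht
    rw [Function.iterate_succ_apply']
    exact sphInt_mvLap_eq hd Y hhom hharm horth hspan hprob (l + l' - 2*t) _
      (iter_mvLap_homog t (hu.mul hv))
  have hiter : ∀ t, t ≤ l+1 → sphInt d (mvLap^[t] (u*v))
      = (∏ s ∈ Finset.range t, κ s) * sphInt d (u * v) := by
    intro t
    induction t with
    | zero => intro _; simp
    | succ t iht =>
      intro h
      rw [hstep t (by omega), iht (by omega), Finset.prod_range_succ]
      ring
  have hkill : mvLap^[l+1] (u*v) = 0 := iter_mvLap_kill l u v hu hLu hLv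
  have h0 : 0 = (∏ s ∈ Finset.range (l+1), κ s) * sphInt d (u*v) := by
    rw [← hiter (l+1) le_rfl, hkill, sphInt_zero]
  have hκne : ∀ s ∈ Finset.range (l+1), κ s ≠ 0 := by
    intro s hs
    rw [Finset.mem_range] at hs
    have h1 : 1 ≤ l + l' - 2*s := by omega
    have hc1 : (1:ℝ) ≤ ((l + l' - 2*s:ℕ):ℝ) := by exact_mod_cast h1
    have hc2 : (2:ℝ) ≤ (d:ℝ) := by exact_mod_cast hd
    rw [hκdef]
    simp only []
    apply div_ne_zero
    · nlinarith
    · exact Nat.cast_ne_zero.mpr (by omega)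
  have hprodne : (∏ s ∈ Finset.range (l+1), κ s) ≠ 0 := Finset.prod_ne_zero_iff.mpr hκne
  rcases mul_eq_zero.mp h0.symm with h | h
  · exact absurd h hprodne
  · exact h

end Chain

end SG

/-- for an orthonormal basis `Y_{l,m}` of spherical harmonics, for `l, l' ≥ 1`,
`E[(∇Y_{l,m}(w) − (l/d) Y_{l,m}(w) w) · ∇Y_{l',m'}(w)]
  = ((l² + l'² + (l + l')(d − 2))/(2d)) δ_{ll'} δ_{mm'}`;
in particular it vanishes unless `(l,m) = (l',m')`, when it equals `l(l + d − 2)/d`. -/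
theorem tangent_gradient_expectation (d : ℕ) (hd : 2 ≤ d)
    (Y : (l : ℕ) → Fin (harmDim d l) → MvPolynomial (Fin d) ℝ)
    (hhom : ∀ l m, (Y l m).IsHomogeneous l)
    (hharm : ∀ l m, mvLap (Y l m) = 0)
    (horth : ∀ l (m m' : Fin (harmDim d l)),
      ∫ x, sphEval (Y l m) x * sphEval (Y l m') x ∂(sphereUniform d)
        = if m = m' then 1 else 0)
    (hspan : ∀ l (p : MvPolynomial (Fin d) ℝ), p.IsHomogeneous l → mvLap p = 0 →
      p ∈ Submodule.span ℝ (Set.range (Y l))) :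
    (∀ (l l' : ℕ), 1 ≤ l → 1 ≤ l' → ∀ (m : Fin (harmDim d l)) (m' : Fin (harmDim d l')),
      (∫ w, ∑ i, (sphEval (pderiv i (Y l m)) w - ((l : ℝ) / d) * sphEval (Y l m) w * w i)
          * sphEval (pderiv i (Y l' m')) w ∂(sphereUniform d))
        = if l = l' ∧ (m : ℕ) = (m' : ℕ) then
            ((l : ℝ) ^ 2 + (l' : ℝ) ^ 2 + ((l : ℝ) + (l' : ℝ)) * ((d : ℝ) - 2)) / (2 * d)
          else 0) ∧
    (∀ (l : ℕ), 1 ≤ l → ∀ (m : Fin (harmDim d l)),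
      (∫ w, ∑ i, (sphEval (pderiv i (Y l m)) w - ((l : ℝ) / d) * sphEval (Y l m) w * w i)
          * sphEval (pderiv i (Y l m)) w ∂(sphereUniform d))
        = (l : ℝ) * ((l : ℝ) + (d : ℝ) - 2) / d) := by
  classical
  have hdne : (d:ℝ) ≠ 0 := Nat.cast_ne_zero.mpr (by omega)
  rcases SG.sphereUniform_zero_or_prob d with hz | hprob
  · exfalso
    have hdim : 0 < harmDim d 0 := by
      rw [harmDim]
      have h1 : (d + 0 - 1).choose (d-1) = 1 := by
        rw [show d + 0 - 1 = d - 1 by omega, Nat.choose_self]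
      have h2 : (d + 0 - 3).choose (d-1) = 0 := Nat.choose_eq_zero_of_lt (by omega)
      omega
    have h := horth 0 ⟨0, hdim⟩ ⟨0, hdim⟩
    rw [hz] at h
    simp at h
  have main : ∀ (l l' : ℕ), 1 ≤ l → 1 ≤ l' →
      ∀ (m : Fin (harmDim d l)) (m' : Fin (harmDim d l')),
      (∫ w, ∑ i, (sphEval (pderiv i (Y l m)) w - ((l : ℝ) / d) * sphEval (Y l m) w * w i)
          * sphEval (pderiv i (Y l' m')) w ∂(sphereUniform d))
        = if l = l' ∧ (m : ℕ) = (m' : ℕ) then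
            ((l : ℝ) ^ 2 + (l' : ℝ) ^ 2 + ((l : ℝ) + (l' : ℝ)) * ((d : ℝ) - 2)) / (2 * d)
          else 0 := by
    intro l l' hl hl' m m'
    have hint : (∫ w, ∑ i, (sphEval (pderiv i (Y l m)) w
          - ((l : ℝ) / d) * sphEval (Y l m) w * w i)
          * sphEval (pderiv i (Y l' m')) w ∂(sphereUniform d))
        = SG.sphInt d (∑ i, (pderiv i (Y l m) - ((l:ℝ)/d) • (Y l m * X i))
            * pderiv i (Y l' m')) := by
      rw [SG.sphInt]
      apply integral_congr_ae
      filter_upwards with w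
      rw [SG.sphEval_sum]
      refine Finset.sum_congr rfl fun i _ => ?_
      rw [SG.sphEval_mul, SG.sphEval_sub, SG.sphEval_smul, SG.sphEval_mul, SG.sphEval_X]
      ring
    rw [hint]
    have hPeq : (∑ i, (pderiv i (Y l m) - ((l:ℝ)/d) • (Y l m * X i)) * pderiv i (Y l' m'))
        = (∑ i, pderiv i (Y l m) * pderiv i (Y l' m'))
          - ((l:ℝ) * l' / d) • (Y l m * Y l' m') := by
      have hexp : ∀ i : Fin d,
          (pderiv i (Y l m) - ((l:ℝ)/d) • (Y l m * X i)) * pderiv i (Y l' m')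
          = pderiv i (Y l m) * pderiv i (Y l' m')
            - ((l:ℝ)/d) • (Y l m * (X i * pderiv i (Y l' m'))) := by
        intro i
        rw [sub_mul, smul_mul_assoc, mul_assoc]
      simp_rw [hexp]
      rw [Finset.sum_sub_distrib]
      congr 1
      rw [← Finset.smul_sum, ← Finset.mul_sum, SG.euler (hhom l' m'), mul_smul_comm, smul_smul]
      congr 1
      field_simp
    rw [hPeq, SG.sphInt_sub hprob, SG.sphInt_smul]
    have hG := SG.sphInt_mvLap_eq hd Y hhom hharm horth hspan hprob (l + l')
      (Y l m * Y l' m') ((hhom l m).mul (hhom l' m'))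
    have h1 : mvLap (Y l m * Y l' m')
        = (2:ℝ) • (∑ i, pderiv i (Y l m) * pderiv i (Y l' m')) := by
      rw [SG.mvLap_mul, hharm l m, hharm l' m', zero_mul, mul_zero, add_zero, zero_add]
    rw [h1, SG.sphInt_smul] at hG
    by_cases hll : l = l'
    · subst hll
      have horthI : SG.sphInt d (Y l m * Y l m') = if m = m' then 1 else 0 := by
        rw [SG.sphInt]
        simp_rw [SG.sphEval_mul]
        exact horth l m m'
      by_cases hmm : m = m'
      · subst hmm
        rw [if_pos ⟨rfl, rfl⟩]
        rw [if_pos rfl] at horthI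
        rw [horthI, mul_one] at hG
        rw [horthI, mul_one]
        have hGv : SG.sphInt d (∑ i, pderiv i (Y l m) * pderiv i (Y l m))
            = (((l+l:ℕ):ℝ) * (((l+l:ℕ):ℝ) + d - 2) / d)/2 := by linarith
        rw [hGv]
        push_cast
        field_simp
        ring
      · rw [if_neg (by rintro ⟨-, hvv⟩; exact hmm (Fin.ext hvv))]
        rw [if_neg hmm] at horthI
        have hG0 : SG.sphInt d (∑ i, pderiv i (Y l m) * pderiv i (Y l m')) = 0 := by
          rw [horthI, mul_zero] at hG
          linarith
        rw [hG0, horthI, mul_zero, sub_zero]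
    · rw [if_neg (by rintro ⟨h, -⟩; exact hll h)]
      have huv0 : SG.sphInt d (Y l m * Y l' m') = 0 := by
        rcases lt_or_gt_of_ne hll with h | h
        · exact SG.sphInt_cross hd Y hhom hharm horth hspan hprob h (hhom l m)
            (hhom l' m') (hharm l m) (hharm l' m')
        · rw [mul_comm]
          exact SG.sphInt_cross hd Y hhom hharm horth hspan hprob h (hhom l' m')
            (hhom l m) (hharm l' m') (hharm l m)
      have hG0 : SG.sphInt d (∑ i, pderiv i (Y l m) * pderiv i (Y l' m')) = 0 := by
        rw [huv0, mul_zero] at hG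
        linarith
      rw [hG0, huv0, mul_zero, sub_zero]
  refine ⟨main, ?_⟩
  intro l hl m
  have h := main l l hl hl m m
  rw [if_pos ⟨rfl, rfl⟩] at h
  rw [h]
  field_simp
  ring


end
end

section
/- Let d ≥ 2, l ≥ 1, let {Y_{l,m}} be an orthonormal basis of degree-l spherical harmonics on √d S^{d−1}, and let L_{ab} = x_a ∂_b − x_b ∂_a. Then for all indices a, b, c, e ∈ {1,…,d} and all x ∈ √d S^{d−1}: Σ_{m=1}^{đ_l} (L_{ab} Y_{l,m})(x) · (L_{ce} Y_{l,m})(x) = −√(đ_l/d) · P_l'(√d) · (δ_{ae} x_b x_c − δ_{be} x_a x_c − δ_{ac} x_b x_e + δ_{bc} x_a x_e). -/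
open MeasureTheory ProbabilityTheory

noncomputable section

open MvPolynomial

/-- The rotation generator `L_{ab} = X_a ∂_b − X_b ∂_a`. -/
def mvL {d : ℕ} (a b : Fin d) (f : MvPolynomial (Fin d) ℝ) : MvPolynomial (Fin d) ℝ :=
  X a * pderiv b f - X b * pderiv a f


/-- rotation in the (a,b) plane -/
def rot {d : ℕ} (a b : Fin d) (t : ℝ) (x : EuclideanSpace ℝ (Fin d)) :
    EuclideanSpace ℝ (Fin d) :=
  WithLp.toLp 2 (fun i => if i = a then Real.cos t * x a - Real.sin t * x b
    else if i = b then Real.sin t * x a + Real.cos t * x b else x i)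

lemma rot_zero {d : ℕ} (a b : Fin d) (x : EuclideanSpace ℝ (Fin d)) : rot a b 0 x = x := by
  ext i
  simp only [rot, PiLp.toLp_apply, Real.cos_zero, Real.sin_zero]
  split_ifs with h1 h2 <;> subst_vars <;> ring

lemma rot_coord_hasDerivAt {d : ℕ} (a b : Fin d) (hab : a ≠ b) (x : EuclideanSpace ℝ (Fin d))
    (i : Fin d) (t : ℝ) :
    HasDerivAt (fun t => rot a b t x i)
      (if i = a then -(rot a b t x b) else if i = b then rot a b t x a else 0) t := by
  by_cases h1 : i = a
  · subst h1
    simp only [rot, PiLp.toLp_apply, if_pos rfl, if_neg (Ne.symm hab), if_neg hab, ite_true]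
    have h := ((Real.hasDerivAt_cos t).mul_const (x i)).fun_sub
      ((Real.hasDerivAt_sin t).mul_const (x b))
    exact h.congr_deriv (by ring)
  · by_cases h2 : i = b
    · subst h2
      simp only [rot, PiLp.toLp_apply, if_pos rfl, if_neg h1, ite_true]
      have h := ((Real.hasDerivAt_sin t).mul_const (x a)).fun_add
        ((Real.hasDerivAt_cos t).mul_const (x i))
      exact h.congr_deriv (by ring)
    · simp only [rot, PiLp.toLp_apply, if_neg h1, if_neg h2]
      exact hasDerivAt_const t (x i)

lemma mvL_C {d : ℕ} (a b : Fin d) (r : ℝ) : mvL a b (C r) = 0 := by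
  simp [mvL]

lemma mvL_add {d : ℕ} (a b : Fin d) (p q : MvPolynomial (Fin d) ℝ) :
    mvL a b (p + q) = mvL a b p + mvL a b q := by
  simp [mvL]; ring

lemma mvL_mul_X {d : ℕ} (a b : Fin d) (p : MvPolynomial (Fin d) ℝ) (i : Fin d) :
    mvL a b (p * X i) = mvL a b p * X i + p * mvL a b (X i) := by
  simp [mvL, pderiv_mul]; ring

lemma sphEval_rot_hasDerivAt {d : ℕ} (a b : Fin d) (hab : a ≠ b)
    (x : EuclideanSpace ℝ (Fin d)) (p : MvPolynomial (Fin d) ℝ) (t : ℝ) :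
    HasDerivAt (fun t => sphEval p (rot a b t x)) (sphEval (mvL a b p) (rot a b t x)) t := by
  induction p using MvPolynomial.induction_on with
  | C r =>
    simp only [sphEval, mvL_C, map_zero, eval_C]
    exact hasDerivAt_const _ _
  | add p q hp hq =>
    simp only [sphEval, mvL_add, map_add]
    exact hp.add hq
  | mul_X p i hp =>
    have h2 := rot_coord_hasDerivAt a b hab x i t
    have h3 := hp.fun_mul h2
    simp only [sphEval, mvL_mul_X, map_add, map_mul, eval_X]
    refine h3.congr_deriv ?_
    simp only [sphEval, mvL, pderiv_X, map_sub, map_mul, eval_X]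
    by_cases h1 : i = a
    · subst h1
      simp [Pi.single, Function.update, hab, Ne.symm hab]
    · by_cases h4 : i = b
      · subst h4
        simp [Pi.single, Function.update, h1, Ne.symm h1]
      · simp [Pi.single, Function.update, h1, h4, Ne.symm h1, Ne.symm h4]

lemma rot_norm {d : ℕ} (a b : Fin d) (hab : a ≠ b) (t : ℝ) (x : EuclideanSpace ℝ (Fin d)) :
    ‖rot a b t x‖ = ‖x‖ := by
  rw [EuclideanSpace.norm_eq, EuclideanSpace.norm_eq]
  congr 1
  have hmem : a ∈ Finset.univ.erase b := Finset.mem_erase.2 ⟨hab, Finset.mem_univ a⟩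
  rw [← Finset.sum_erase_add _ _ (Finset.mem_univ b), ← Finset.sum_erase_add _ _ hmem,
    ← Finset.sum_erase_add Finset.univ (fun i => ‖x i‖ ^ 2) (Finset.mem_univ b),
    ← Finset.sum_erase_add (Finset.univ.erase b) (fun i => ‖x i‖ ^ 2) hmem]
  have hsum : ∑ i ∈ (Finset.univ.erase b).erase a, ‖rot a b t x i‖ ^ 2
      = ∑ i ∈ (Finset.univ.erase b).erase a, ‖x i‖ ^ 2 := by
    refine Finset.sum_congr rfl (fun i hi => ?_)
    have h1 : i ≠ a := (Finset.mem_erase.1 hi).1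
    have h2 : i ≠ b := (Finset.mem_erase.1 (Finset.mem_erase.1 hi).2).1
    simp [rot, h1, h2]
  rw [hsum]
  have ha : rot a b t x a = Real.cos t * x a - Real.sin t * x b := by simp [rot]
  have hb : rot a b t x b = Real.sin t * x a + Real.cos t * x b := by
    simp [rot, Ne.symm hab]
  rw [ha, hb]
  simp only [Real.norm_eq_abs, sq_abs]
  nlinarith [Real.sin_sq_add_cos_sq t]

lemma rot_mem_sphere {d : ℕ} (a b : Fin d) (hab : a ≠ b) (t : ℝ) (r : ℝ)
    (x : EuclideanSpace ℝ (Fin d)) (hx : x ∈ Metric.sphere (0 : EuclideanSpace ℝ (Fin d)) r) :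
    rot a b t x ∈ Metric.sphere (0 : EuclideanSpace ℝ (Fin d)) r := by
  rw [mem_sphere_zero_iff_norm] at hx ⊢
  rw [rot_norm a b hab t x, hx]

/-- the linear polynomial `∑ i (y i) Xᵢ` -/
def linPoly {d : ℕ} (y : EuclideanSpace ℝ (Fin d)) : MvPolynomial (Fin d) ℝ :=
  ∑ i : Fin d, C (y i) * X i

lemma sphEval_linPoly {d : ℕ} (y z : EuclideanSpace ℝ (Fin d)) :
    sphEval (linPoly y) z = ∑ i : Fin d, y i * z i := by
  simp [sphEval, linPoly]

lemma inner_eq_sphEval_linPoly {d : ℕ} (y z : EuclideanSpace ℝ (Fin d)) :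
    (inner ℝ y z : ℝ) = sphEval (linPoly y) z := by
  rw [sphEval_linPoly]
  simp [PiLp.inner_apply, mul_comm]

lemma mvL_linPoly {d : ℕ} (a b : Fin d) (y : EuclideanSpace ℝ (Fin d)) :
    mvL a b (linPoly y) = C (y b) * X a - C (y a) * X b := by
  have hpd : ∀ j : Fin d, pderiv j (linPoly y) = C (y j) := by
    intro j
    simp only [linPoly, map_sum]
    rw [Finset.sum_eq_single j]
    · simp
    · intro i _ hij
      simp [pderiv_X, Pi.single, Function.update, Ne.symm hij, hij]
    · simp
  simp only [mvL, hpd]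
  ring

lemma delta_bracket {d : ℕ} (a b c e : Fin d) (hab : a ≠ b) (x : EuclideanSpace ℝ (Fin d)) :
    (x c * (if e = a then -(x b) else if e = b then x a else 0)
        - x e * (if c = a then -(x b) else if c = b then x a else 0))
      = -((if a = e then (1:ℝ) else 0) * x b * x c
          - (if b = e then (1:ℝ) else 0) * x a * x c
          - (if a = c then (1:ℝ) else 0) * x b * x e
          + (if b = c then (1:ℝ) else 0) * x a * x e) := by
  split_ifs <;> subst_vars <;> first | exact absurd rfl ‹_› | ring1

/-- for an orthonormal basis of degree-`l` spherical harmonics and the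
associated Gegenbauer polynomial `P_l`, for all `a, b, c, e` and `x ∈ √d S^{d−1}`,
`∑_m L_{ab}Y_{l,m}(x) · L_{ce}Y_{l,m}(x)
  = −√(đ_l/d) P_l'(√d) (δ_{ae} x_b x_c − δ_{be} x_a x_c − δ_{ac} x_b x_e + δ_{bc} x_a x_e)`. -/
theorem rotation_generator_sum (d l : ℕ) (hd : 2 ≤ d) (hl : 1 ≤ l)
    (Y : (l : ℕ) → Fin (harmDim d l) → MvPolynomial (Fin d) ℝ)
    (hhom : ∀ l m, (Y l m).IsHomogeneous l)
    (hharm : ∀ l m, mvLap (Y l m) = 0)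
    (horth : ∀ l (m m' : Fin (harmDim d l)),
      ∫ x, sphEval (Y l m) x * sphEval (Y l m') x ∂(sphereUniform d)
        = if m = m' then 1 else 0)
    (hspan : ∀ l (p : MvPolynomial (Fin d) ℝ), p.IsHomogeneous l → mvLap p = 0 →
      p ∈ Submodule.span ℝ (Set.range (Y l)))
    (P : Polynomial ℝ)
    (hP : ∀ x ∈ Metric.sphere (0 : EuclideanSpace ℝ (Fin d)) (Real.sqrt d),
      ∀ x' ∈ Metric.sphere (0 : EuclideanSpace ℝ (Fin d)) (Real.sqrt d),
      P.eval ((inner ℝ x x' : ℝ) / Real.sqrt d)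
        = (1 / Real.sqrt (harmDim d l)) *
            ∑ m : Fin (harmDim d l), sphEval (Y l m) x * sphEval (Y l m) x') :
    ∀ (a b c e : Fin d), ∀ x ∈ Metric.sphere (0 : EuclideanSpace ℝ (Fin d)) (Real.sqrt d),
    ∑ m : Fin (harmDim d l), sphEval (mvL a b (Y l m)) x * sphEval (mvL c e (Y l m)) x
      = -Real.sqrt ((harmDim d l : ℝ) / d) * P.derivative.eval (Real.sqrt d)
          * ((if a = e then 1 else 0) * x b * x c
            - (if b = e then 1 else 0) * x a * x c
            - (if a = c then 1 else 0) * x b * x e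
            + (if b = c then 1 else 0) * x a * x e) := by
  intro a b c e x hx
  -- trivial case a = b
  rcases eq_or_ne a b with hab | hab
  · subst hab
    have hz : ∀ m, sphEval (mvL a a (Y l m)) x = 0 := fun m => by simp [mvL, sphEval]
    rw [Finset.sum_eq_zero (fun m _ => by rw [hz m, zero_mul])]
    ring
  -- trivial case c = e
  rcases eq_or_ne c e with hce | hce
  · subst hce
    have hz : ∀ m, sphEval (mvL c c (Y l m)) x = 0 := fun m => by simp [mvL, sphEval]
    rw [Finset.sum_eq_zero (fun m _ => by rw [hz m, mul_zero])]
    ring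
  -- trivial case harmDim d l = 0
  rcases Nat.eq_zero_or_pos (harmDim d l) with h0 | hNpos
  · have hc0 : ((harmDim d l : ℕ) : ℝ) = 0 := by rw [h0]; norm_num
    haveI : IsEmpty (Fin (harmDim d l)) := by rw [h0]; infer_instance
    rw [Finset.univ_eq_empty, Finset.sum_empty, hc0, zero_div, Real.sqrt_zero]
    ring
  -- main case
  have hd0 : (0:ℝ) ≤ (d:ℝ) := Nat.cast_nonneg d
  have hN0 : (0:ℝ) < ((harmDim d l : ℕ) : ℝ) := by exact_mod_cast hNpos
  have hsN : (0:ℝ) < Real.sqrt (harmDim d l) := Real.sqrt_pos.2 hN0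
  have hxnorm : ‖x‖ = Real.sqrt d := mem_sphere_zero_iff_norm.1 hx
  have hxx : (inner ℝ x x : ℝ) = (d:ℝ) := by
    rw [real_inner_self_eq_norm_sq, hxnorm, Real.sq_sqrt hd0]
  have hX1 : ∀ t, rot a b t x ∈ Metric.sphere (0 : EuclideanSpace ℝ (Fin d)) (Real.sqrt d) :=
    fun t => rot_mem_sphere a b hab t _ x hx
  have hX2 : ∀ s, rot c e s x ∈ Metric.sphere (0 : EuclideanSpace ℝ (Fin d)) (Real.sqrt d) :=
    fun s => rot_mem_sphere c e hce s _ x hx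
  -- the addition formula along the two rotation flows
  have hsum_eq : ∀ t s : ℝ,
      (∑ m : Fin (harmDim d l), sphEval (Y l m) (rot a b t x) * sphEval (Y l m) (rot c e s x))
        = Real.sqrt (harmDim d l) *
            Polynomial.eval ((inner ℝ (rot a b t x) (rot c e s x) : ℝ) / Real.sqrt d) P := by
    intro t s
    rw [hP _ (hX1 t) _ (hX2 s)]
    field_simp
  -- derivative in s at 0, for each fixed t : LHS
  have hA : ∀ t : ℝ, HasDerivAt
      (fun s => ∑ m : Fin (harmDim d l),
        sphEval (Y l m) (rot a b t x) * sphEval (Y l m) (rot c e s x))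
      (∑ m : Fin (harmDim d l),
        sphEval (Y l m) (rot a b t x) * sphEval (mvL c e (Y l m)) x) 0 := by
    intro t
    have h := HasDerivAt.fun_sum (fun m (_ : m ∈ Finset.univ) =>
      HasDerivAt.const_mul (sphEval (Y l m) (rot a b t x))
        (sphEval_rot_hasDerivAt c e hce x (Y l m) 0))
    rw [rot_zero c e x] at h
    exact h
  -- derivative in s at 0, for each fixed t : RHS
  have hIn : ∀ t : ℝ, HasDerivAt
      (fun s => (inner ℝ (rot a b t x) (rot c e s x) : ℝ))
      (x c * (rot a b t x) e - x e * (rot a b t x) c) 0 := by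
    intro t
    have h := sphEval_rot_hasDerivAt c e hce x (linPoly (rot a b t x)) 0
    rw [rot_zero c e x] at h
    have hfun : (fun s => (inner ℝ (rot a b t x) (rot c e s x) : ℝ))
        = fun s => sphEval (linPoly (rot a b t x)) (rot c e s x) :=
      funext fun s => inner_eq_sphEval_linPoly _ _
    rw [hfun]
    convert h using 1
    rw [mvL_linPoly]
    simp [sphEval]
    ring
  have hB : ∀ t : ℝ, HasDerivAt
      (fun s => Real.sqrt (harmDim d l) *
        Polynomial.eval ((inner ℝ (rot a b t x) (rot c e s x) : ℝ) / Real.sqrt d) P)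
      (Real.sqrt (harmDim d l) *
        (Polynomial.eval ((inner ℝ (rot a b t x) x : ℝ) / Real.sqrt d) P.derivative *
          ((x c * (rot a b t x) e - x e * (rot a b t x) c) / Real.sqrt d))) 0 := by
    intro t
    have h1 := (hIn t).div_const (Real.sqrt d)
    have h2 := Polynomial.hasDerivAt P ((inner ℝ (rot a b t x) (rot c e 0 x) : ℝ) / Real.sqrt d)
    have h3 := HasDerivAt.comp 0 h2 h1
    rw [rot_zero c e x] at h3
    simp only [Function.comp_def] at h3
    exact HasDerivAt.const_mul _ h3
  -- equality of the two s-derivatives, for every t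
  have hAB : ∀ t : ℝ,
      (∑ m : Fin (harmDim d l),
        sphEval (Y l m) (rot a b t x) * sphEval (mvL c e (Y l m)) x)
      = Real.sqrt (harmDim d l) *
        (Polynomial.eval ((inner ℝ (rot a b t x) x : ℝ) / Real.sqrt d) P.derivative *
          ((x c * (rot a b t x) e - x e * (rot a b t x) c) / Real.sqrt d)) := by
    intro t
    have h := hA t
    rw [funext (hsum_eq t)] at h
    exact h.unique (hB t)
  -- now differentiate in t at 0 : LHS
  have hA' : HasDerivAt
      (fun t => ∑ m : Fin (harmDim d l),
        sphEval (Y l m) (rot a b t x) * sphEval (mvL c e (Y l m)) x)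
      (∑ m : Fin (harmDim d l),
        sphEval (mvL a b (Y l m)) x * sphEval (mvL c e (Y l m)) x) 0 := by
    have h := HasDerivAt.fun_sum (fun m (_ : m ∈ Finset.univ) =>
      HasDerivAt.mul_const (sphEval_rot_hasDerivAt a b hab x (Y l m) 0)
        (sphEval (mvL c e (Y l m)) x))
    rw [rot_zero a b x] at h
    exact h
  -- t-derivative of the inner product ⟪rot t x, x⟫
  have hIn' : HasDerivAt (fun t => (inner ℝ (rot a b t x) x : ℝ))
      (sphEval (mvL a b (linPoly x)) x) 0 := by
    have h := sphEval_rot_hasDerivAt a b hab x (linPoly x) 0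
    rw [rot_zero a b x] at h
    have hfun : (fun t => (inner ℝ (rot a b t x) x : ℝ))
        = fun t => sphEval (linPoly x) (rot a b t x) := by
      funext t
      rw [real_inner_comm]
      exact inner_eq_sphEval_linPoly x (rot a b t x)
    rw [hfun]
    exact h
  -- t-derivative of the factor  x c * (rot t x) e − x e * (rot t x) c
  have h7 : HasDerivAt
      (fun t => (x c * (rot a b t x) e - x e * (rot a b t x) c) / Real.sqrt d)
      ((x c * (if e = a then -(x b) else if e = b then x a else 0)
        - x e * (if c = a then -(x b) else if c = b then x a else 0)) / Real.sqrt d) 0 := by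
    have he := rot_coord_hasDerivAt a b hab x e 0
    have hc := rot_coord_hasDerivAt a b hab x c 0
    rw [rot_zero a b x] at he hc
    exact ((HasDerivAt.const_mul (x c) he).sub (HasDerivAt.const_mul (x e) hc)).div_const _
  -- product rule on the RHS
  have h6 : HasDerivAt
      (fun t => Polynomial.eval ((inner ℝ (rot a b t x) x : ℝ) / Real.sqrt d) P.derivative)
      (Polynomial.eval ((inner ℝ (rot a b 0 x) x : ℝ) / Real.sqrt d) P.derivative.derivative *
        (sphEval (mvL a b (linPoly x)) x / Real.sqrt d)) 0 := by
    have h1 := hIn'.div_const (Real.sqrt d)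
    have h2 := Polynomial.hasDerivAt P.derivative ((inner ℝ (rot a b 0 x) x : ℝ) / Real.sqrt d)
    have h3 := HasDerivAt.comp 0 h2 h1
    simp only [Function.comp_def] at h3
    exact h3
  have hB' : HasDerivAt
      (fun t => Real.sqrt (harmDim d l) *
        (Polynomial.eval ((inner ℝ (rot a b t x) x : ℝ) / Real.sqrt d) P.derivative *
          ((x c * (rot a b t x) e - x e * (rot a b t x) c) / Real.sqrt d)))
      (Real.sqrt (harmDim d l) *
        (Polynomial.eval ((inner ℝ (rot a b 0 x) x : ℝ) / Real.sqrt d) P.derivative.derivative *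
            (sphEval (mvL a b (linPoly x)) x / Real.sqrt d) *
          ((x c * (rot a b 0 x) e - x e * (rot a b 0 x) c) / Real.sqrt d)
        + Polynomial.eval ((inner ℝ (rot a b 0 x) x : ℝ) / Real.sqrt d) P.derivative *
          ((x c * (if e = a then -(x b) else if e = b then x a else 0)
            - x e * (if c = a then -(x b) else if c = b then x a else 0)) / Real.sqrt d))) 0 :=
    HasDerivAt.const_mul _ (h6.mul h7)
  -- combine
  have hkey : (∑ m : Fin (harmDim d l),
        sphEval (mvL a b (Y l m)) x * sphEval (mvL c e (Y l m)) x)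
      = Real.sqrt (harmDim d l) *
        (Polynomial.eval ((inner ℝ (rot a b 0 x) x : ℝ) / Real.sqrt d) P.derivative.derivative *
            (sphEval (mvL a b (linPoly x)) x / Real.sqrt d) *
          ((x c * (rot a b 0 x) e - x e * (rot a b 0 x) c) / Real.sqrt d)
        + Polynomial.eval ((inner ℝ (rot a b 0 x) x : ℝ) / Real.sqrt d) P.derivative *
          ((x c * (if e = a then -(x b) else if e = b then x a else 0)
            - x e * (if c = a then -(x b) else if c = b then x a else 0)) / Real.sqrt d)) := by
    have h := hA'
    rw [funext hAB] at h
    exact h.unique hB'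
  rw [hkey, rot_zero a b x, hxx]
  have hds : (d : ℝ) / Real.sqrt d = Real.sqrt d := Real.div_sqrt
  have hsq : Real.sqrt ((harmDim d l : ℝ) / d)
      = Real.sqrt (harmDim d l) / Real.sqrt d := Real.sqrt_div hN0.le d
  rw [hds, hsq]
  have hzero : x c * x e - x e * x c = 0 := by ring
  rw [hzero]
  have hW : (x c * (if e = a then -(x b) else if e = b then x a else 0)
        - x e * (if c = a then -(x b) else if c = b then x a else 0))
      = -((if a = e then (1:ℝ) else 0) * x b * x c
          - (if b = e then (1:ℝ) else 0) * x a * x c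
          - (if a = c then (1:ℝ) else 0) * x b * x e
          + (if b = c then (1:ℝ) else 0) * x a * x e) :=
    delta_bracket a b c e hab x
  rw [hW]
  ring

end
end
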